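/- Let H = (V,F) be a directed hypergraph where each hyperedge e ∈ F has a set src(e) ⊆ V of source nodes and a destination dest(e) ∈ V, let S ⊆ V and t ∈ V, and let p_v (v ∈ V) be distinct variables. Define W = {p_s | s ∈ S} and D = {(⋀_{v ∈ src(e)} p_v : ⊤ / p_{dest(e)}) | e ∈ F} ∪ {(p_t : ⊤ / ⊥)}. Then t is hyperedge-reachable from S in H if and only if ⟨W,D⟩ has no stable extension. -/
import Mathlib


inductive Form : Type where
  | var : ℕ → Form
  | app : (n : ℕ) → ((Fin n → Bool) → Bool) → (Fin n → Form) → Form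

namespace Form

def eval (σ : ℕ → Bool) : Form → Bool
  | var x => σ x
  | app _ f a => f (fun i => (a i).eval σ)

def tru : Form := app 0 (fun _ => true) (fun i => i.elim0)
def fls : Form := app 0 (fun _ => false) (fun i => i.elim0)
def neg (φ : Form) : Form := app 1 (fun v => !(v 0)) (fun _ => φ)
def conj (φ ψ : Form) : Form := app 2 (fun v => v 0 && v 1) ![φ, ψ]
def disj (φ ψ : Form) : Form := app 2 (fun v => v 0 || v 1) ![φ, ψ]

end Form

/-- σ satisfies all formulae of A. -/
def Sat (σ : ℕ → Bool) (A : Set Form) : Prop := ∀ φ ∈ A, φ.eval σ = true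

/-- Semantic consequence A ⊨ φ. -/
def Entails (A : Set Form) (φ : Form) : Prop := ∀ σ, Sat σ A → φ.eval σ = true

/-- Th(A) = {φ | A ⊨ φ}. -/
def Th (A : Set Form) : Set Form := {φ | Entails A φ}

def Consistent (A : Set Form) : Prop := ∃ σ, Sat σ A

/-- A default rule (α : β / γ). -/
structure Default where
  pre : Form
  just : Form
  con : Form

/-- S contains W, is deductively closed, and closed under defaults applicable w.r.t. E. -/
def GammaClosed (W : Set Form) (D : Set Default) (E S : Set Form) : Prop :=
  W ⊆ S ∧ Th S = S ∧ ∀ d ∈ D, d.pre ∈ S → Form.neg d.just ∉ E → d.con ∈ S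

/-- Γ(E): the smallest set satisfying the three closure conditions. -/
def Gamma (W : Set Form) (D : Set Default) (E : Set Form) : Set Form :=
  ⋂₀ {S | GammaClosed W D E S}

/-- E is a stable extension of ⟨W,D⟩. -/
def Stable (W : Set Form) (D : Set Default) (E : Set Form) : Prop :=
  Gamma W D E = E


def bigConj (l : List Form) : Form := l.foldr Form.conj Form.tru

/-- Hyperedge-reachability in a directed hypergraph: edges are pairs of a list
of source nodes and a destination node. -/
inductive HReach {V : Type} (S : Set V) (F : Set (List V × V)) : V → Prop
  | base {v : V} : v ∈ S → HReach S F v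
  | step {e : List V × V} : e ∈ F → (∀ v ∈ e.1, HReach S F v) → HReach S F e.2

section AuxLemmas

lemma eval_tru' (σ : ℕ → Bool) : Form.tru.eval σ = true := rfl

lemma eval_neg' (σ : ℕ → Bool) (φ : Form) : (Form.neg φ).eval σ = !(φ.eval σ) := rfl

lemma eval_fls' (σ : ℕ → Bool) : Form.fls.eval σ = false := rfl

lemma eval_conj' (σ : ℕ → Bool) (φ ψ : Form) :
    (Form.conj φ ψ).eval σ = (φ.eval σ && ψ.eval σ) := by
  simp [Form.conj, Form.eval]

lemma negTru_eval (σ : ℕ → Bool) : (Form.neg Form.tru).eval σ = false := rfl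

lemma eval_bigConj (σ : ℕ → Bool) (l : List Form) :
    (bigConj l).eval σ = true ↔ ∀ φ ∈ l, φ.eval σ = true := by
  induction l with
  | nil => simp [bigConj, eval_tru']
  | cons a l ih =>
    simp only [bigConj, List.foldr] at ih ⊢
    rw [eval_conj', Bool.and_eq_true, ih]
    simp

lemma subset_Th (A : Set Form) : A ⊆ Th A := fun φ hφ σ hσ => hσ φ hφ

lemma Th_mono {A B : Set Form} (h : A ⊆ B) : Th A ⊆ Th B :=
  fun φ hφ σ hσ => hφ σ (fun ψ hψ => hσ ψ (h hψ))

lemma Th_Th (A : Set Form) : Th (Th A) = Th A := by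
  apply Set.Subset.antisymm _ (subset_Th _)
  intro φ h σ hσ
  exact h σ (fun ψ hψ => hψ σ hσ)

lemma gc_univ (W : Set Form) (D : Set Default) (E : Set Form) :
    GammaClosed W D E Set.univ := by
  refine ⟨Set.subset_univ _, ?_, fun _ _ _ _ => trivial⟩
  apply Set.Subset.antisymm (fun _ _ => trivial) (subset_Th _)

lemma Gamma_subset {W : Set Form} {D : Set Default} {E X : Set Form}
    (h : GammaClosed W D E X) : Gamma W D E ⊆ X :=
  Set.sInter_subset_of_mem h

lemma gc_Gamma (W : Set Form) (D : Set Default) (E : Set Form) :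
    GammaClosed W D E (Gamma W D E) := by
  refine ⟨?_, ?_, ?_⟩
  · intro φ hφ
    exact Set.mem_sInter.2 fun X hX => hX.1 hφ
  · apply Set.Subset.antisymm _ (subset_Th _)
    intro φ hφ
    refine Set.mem_sInter.2 fun X hX => ?_
    have : Th (Gamma W D E) ⊆ Th X := Th_mono (Gamma_subset hX)
    rw [hX.2.1] at this
    exact this hφ
  · intro d hd hpre hj
    refine Set.mem_sInter.2 fun X hX => ?_
    exact hX.2.2 d hd (Gamma_subset hX hpre) hj

end AuxLemmas

section Main

variable {V : Type} (F : Set (List V × V)) (S : Set V) (t : V) (p : V → ℕ)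

/-- The set W of the default theory. -/
def theW : Set Form := {φ | ∃ s ∈ S, φ = Form.var (p s)}

/-- The set D of the default theory. -/
def theD : Set Default :=
  {d | ∃ e ∈ F, d = ⟨bigConj (e.1.map fun v => Form.var (p v)), Form.tru,
      Form.var (p e.2)⟩} ∪ {⟨Form.var (p t), Form.tru, Form.fls⟩}

lemma theD_just {d : Default} (hd : d ∈ theD F t p) : d.just = Form.tru := by
  rcases hd with ⟨e, _, rfl⟩ | hd
  · rfl
  · rw [Set.mem_singleton_iff] at hd; rw [hd]

/-- In any GammaClosed set (with ¬⊤ ∉ E), all reachable variables occur. -/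
lemma reach_mem {E X : Set Form}
    (hX : GammaClosed (theW S p) (theD F t p) E X)
    (hE : Form.neg Form.tru ∉ E) {v : V} (hv : HReach S F v) :
    Form.var (p v) ∈ X := by
  induction hv with
  | base h => exact hX.1 ⟨_, h, rfl⟩
  | @step e he hsrc ih =>
    have hpre : bigConj (e.1.map fun v => Form.var (p v)) ∈ X := by
      rw [← hX.2.1]
      intro σ hσ
      rw [eval_bigConj]
      intro φ hφ
      rw [List.mem_map] at hφ
      obtain ⟨u, hu, rfl⟩ := hφ
      exact hσ _ (ih u hu)
    exact hX.2.2 _ (Or.inl ⟨e, he, rfl⟩) hpre hE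

lemma forward (hp : Function.Injective p) (ht : HReach S F t) :
    ¬ ∃ E : Set Form, Stable (theW S p) (theD F t p) E := by
  rintro ⟨E, hE⟩
  by_cases hnt : Form.neg Form.tru ∈ E
  · -- all defaults blocked; E = Γ(E) ⊆ Th W, but ¬⊤ ∉ Th W
    have hgc : GammaClosed (theW S p) (theD F t p) E (Th (theW S p)) := by
      refine ⟨subset_Th _, Th_Th _, fun d hd _ hj => ?_⟩
      rw [theD_just F t p hd] at hj
      exact absurd hnt hj
    have : E ⊆ Th (theW S p) := hE ▸ Gamma_subset hgc
    have h2 := this hnt (fun _ => true) (by rintro φ ⟨s, _, rfl⟩; rfl)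
    rw [negTru_eval] at h2
    exact Bool.false_ne_true h2
  · -- t-variable, hence ⊥, lies in every GammaClosed set, hence in E
    have hfls : Form.fls ∈ E := by
      rw [← hE]
      refine Set.mem_sInter.2 fun X hX => ?_
      exact hX.2.2 _ (Or.inr rfl) (reach_mem F S t p hX hnt ht) hnt
    have hgcE : GammaClosed (theW S p) (theD F t p) E E := by
      have := gc_Gamma (theW S p) (theD F t p) E
      rwa [hE] at this
    apply hnt
    rw [← hgcE.2.1]
    intro σ hσ
    have := hσ _ hfls
    rw [eval_fls'] at this
    exact absurd this Bool.false_ne_true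

lemma backward (hp : Function.Injective p) (ht : ¬ HReach S F t) :
    ∃ E : Set Form, Stable (theW S p) (theD F t p) E := by
  classical
  -- the model making exactly the reachable variables true
  set σR : ℕ → Bool := fun n => decide (∃ v, HReach S F v ∧ p v = n) with hσR
  set M : Set Form := {φ | φ.eval σR = true} with hM
  have hMvar : ∀ v : V, Form.var (p v) ∈ M ↔ HReach S F v := by
    intro v
    simp only [hM, Set.mem_setOf_eq, Form.eval, hσR, decide_eq_true_eq]
    constructor
    · rintro ⟨u, hu, h⟩; rwa [← hp h]
    · intro h; exact ⟨v, h, rfl⟩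
  have hgcM : GammaClosed (theW S p) (theD F t p) ∅ M := by
    refine ⟨?_, ?_, ?_⟩
    · rintro φ ⟨s, hs, rfl⟩
      exact (hMvar s).2 (HReach.base hs)
    · apply Set.Subset.antisymm _ (subset_Th _)
      intro φ hφ
      exact hφ σR (fun ψ hψ => hψ)
    · rintro d (⟨e, he, rfl⟩ | hd) hpre _
      · have : ∀ v ∈ e.1, HReach S F v := by
          intro v hv
          apply (hMvar v).1
          have := (eval_bigConj σR _).1 hpre (Form.var (p v)) (List.mem_map.2 ⟨v, hv, rfl⟩)
          exact this
        exact (hMvar e.2).2 (HReach.step he this)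
      · rw [Set.mem_singleton_iff] at hd
        subst hd
        exact absurd ((hMvar t).1 hpre) ht
  have hnM : Form.neg Form.tru ∉ M := by
    simp [hM, negTru_eval]
  refine ⟨Gamma (theW S p) (theD F t p) ∅, ?_⟩
  have hnE : Form.neg Form.tru ∉ Gamma (theW S p) (theD F t p) ∅ :=
    fun h => hnM (Gamma_subset hgcM h)
  -- the family of GammaClosed sets w.r.t. Γ(∅) and ∅ coincide
  have hfam : {X | GammaClosed (theW S p) (theD F t p) (Gamma (theW S p) (theD F t p) ∅) X}
      = {X | GammaClosed (theW S p) (theD F t p) ∅ X} := by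
    ext X
    simp only [Set.mem_setOf_eq, GammaClosed]
    refine and_congr_right fun _ => and_congr_right fun _ => ?_
    constructor
    · intro h d hd hpre _
      refine h d hd hpre ?_
      rw [theD_just F t p hd]
      exact hnE
    · intro h d hd hpre _
      exact h d hd hpre (Set.notMem_empty _)
  show Gamma _ _ _ = _
  rw [Gamma, hfam]
  rfl

end Main

/-- t is hyperedge-reachable from S in H iff the associated default theory has
no stable extension. -/
theorem stmt17 (V : Type) (F : Set (List V × V)) (hF : F.Finite)
    (S : Set V) (t : V) (p : V → ℕ) (hp : Function.Injective p) :
    HReach S F t ↔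
    ¬ ∃ E : Set Form,
        Stable {φ | ∃ s ∈ S, φ = Form.var (p s)}
          ({d | ∃ e ∈ F,
              d = ⟨bigConj (e.1.map fun v => Form.var (p v)), Form.tru,
                   Form.var (p e.2)⟩} ∪
            {⟨Form.var (p t), Form.tru, Form.fls⟩}) E := by
  constructor
  · intro h
    exact forward F S t p hp h
  · intro h
    by_contra hnr
    exact h (backward F S t p hp hnr)
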